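/- For every q > 1, the set {λ > 0 : h_q(λ) = 1} is nonempty and has a least element λ₀(q), which satisfies 3/2 < λ₀(q) < e. Moreover, q ↦ λ₀(q) is increasing on (1,∞), and λ₀(q) → e as q → ∞. -/

import Mathlib

/-- `h_q(λ) := λ e^{−λ/e} (√(4 + e^{−2λ/e}) − e^{−λ/e})^{1/q} / (2^{1/q}(1 − e^{−λ/e})^{1/(2q)})`. -/
noncomputable def hFun (q lam : ℝ) : ℝ :=
  lam * Real.exp (-(lam / Real.exp 1)) *
    ((Real.sqrt (4 + Real.exp (-(2 * lam / Real.exp 1))) - Real.exp (-(lam / Real.exp 1))) ^ (1 / q)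
      / ((2:ℝ) ^ (1 / q) * (1 - Real.exp (-(lam / Real.exp 1))) ^ (1 / (2 * q))))

namespace Stmt13

open Real Set Filter Topology

open Real Set Filter

noncomputable def uf (lam : ℝ) : ℝ := Real.exp (-(lam / Real.exp 1))

lemma uf_pos (lam : ℝ) : 0 < uf lam := Real.exp_pos _

lemma uf_lt_one {lam : ℝ} (h : 0 < lam) : uf lam < 1 := by
  have he := Real.exp_pos 1
  have : -(lam / Real.exp 1) < 0 := by
    have : 0 < lam / Real.exp 1 := div_pos h he
    linarith
  calc uf lam < Real.exp 0 := Real.exp_lt_exp.2 this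
    _ = 1 := Real.exp_zero

lemma uf_le_one {lam : ℝ} (h : 0 ≤ lam) : uf lam ≤ 1 := by
  have he := Real.exp_pos 1
  have : -(lam / Real.exp 1) ≤ 0 := by
    have : 0 ≤ lam / Real.exp 1 := div_nonneg h he.le
    linarith
  calc uf lam ≤ Real.exp 0 := Real.exp_le_exp.2 this
    _ = 1 := Real.exp_zero

lemma uf_anti {a b : ℝ} (hab : a ≤ b) : uf b ≤ uf a := by
  apply Real.exp_le_exp.2
  have he := Real.exp_pos 1
  have : a / Real.exp 1 ≤ b / Real.exp 1 := (div_le_div_iff_of_pos_right he).2 hab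
  linarith

/-- monotonicity of `t ↦ t(√(4+t²)−t)` -/
lemma mono_uA {v w : ℝ} (hv : 0 ≤ v) (hvw : v ≤ w) :
    v * (Real.sqrt (4 + v ^ 2) - v) ≤ w * (Real.sqrt (4 + w ^ 2) - w) := by
  set a := Real.sqrt (4 + v ^ 2) with hadef
  set b := Real.sqrt (4 + w ^ 2) with hbdef
  have ha2 : a ^ 2 = 4 + v ^ 2 := Real.sq_sqrt (by positivity)
  have hb2 : b ^ 2 = 4 + w ^ 2 := Real.sq_sqrt (by positivity)
  have ha0 : 0 ≤ a := Real.sqrt_nonneg _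
  have hb0 : 0 ≤ b := Real.sqrt_nonneg _
  have h2a : 2 ≤ a := Real.le_sqrt_of_sq_le (by nlinarith)
  have h2b : 2 ≤ b := Real.le_sqrt_of_sq_le (by nlinarith)
  have key : v * b ≤ w * a := by
    have h1 : (v * b) ^ 2 ≤ (w * a) ^ 2 := by nlinarith
    exact le_of_pow_le_pow_left₀ two_ne_zero (mul_nonneg (hv.trans hvw) ha0) h1
  have e1 : (v * (a - v)) * (a + v) = 4 * v := by linear_combination v * ha2
  have e2 : (w * (b - w)) * (b + w) = 4 * w := by linear_combination w * hb2
  have hav : 0 < a + v := by linarith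
  have hbw : 0 < b + w := by linarith
  have h4 : 4 * v * (b + w) ≤ 4 * w * (a + v) := by nlinarith
  have step : v * (a - v) * ((a + v) * (b + w)) ≤ w * (b - w) * ((a + v) * (b + w)) := by
    calc v * (a - v) * ((a + v) * (b + w)) = (v * (a - v) * (a + v)) * (b + w) := by ring
      _ = 4 * v * (b + w) := by rw [e1]
      _ ≤ 4 * w * (a + v) := h4
      _ = (w * (b - w) * (b + w)) * (a + v) := by rw [e2]
      _ = w * (b - w) * ((a + v) * (b + w)) := by ring
  exact le_of_mul_le_mul_right step (by positivity)

lemma uf_le_sqrt (lam : ℝ) : uf lam ≤ Real.sqrt (4 + uf lam ^ 2) :=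
  Real.le_sqrt_of_sq_le (by nlinarith)

lemma two_le_sqrtA (lam : ℝ) : 2 ≤ Real.sqrt (4 + uf lam ^ 2) :=
  Real.le_sqrt_of_sq_le (by nlinarith [sq_nonneg (uf lam)])

lemma sqrtA_lt {lam : ℝ} (h : 0 < lam) :
    Real.sqrt (4 + uf lam ^ 2) < 2 + uf lam := by
  have hu := uf_pos lam
  have h1 : 4 + uf lam ^ 2 < (2 + uf lam) ^ 2 := by nlinarith
  calc Real.sqrt (4 + uf lam ^ 2) < Real.sqrt ((2 + uf lam) ^ 2) :=
        Real.sqrt_lt_sqrt (by positivity) h1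
    _ = 2 + uf lam := Real.sqrt_sq (by positivity)

/-- key: `√(4+u²) − u > 2√(1−u)`, i.e. `B > 1`. -/
lemma N_gt {lam : ℝ} (h : 0 < lam) :
    2 * Real.sqrt (1 - uf lam) < Real.sqrt (4 + uf lam ^ 2) - uf lam := by
  have hu := uf_pos lam
  have hu1 := uf_lt_one h
  set A := Real.sqrt (4 + uf lam ^ 2) with hA
  set S := Real.sqrt (1 - uf lam) with hS
  have hA2 : A ^ 2 = 4 + uf lam ^ 2 := Real.sq_sqrt (by positivity)
  have hS2 : S ^ 2 = 1 - uf lam := Real.sq_sqrt (by linarith)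
  have hS0 : 0 ≤ S := Real.sqrt_nonneg _
  have h2A : 2 ≤ A := two_le_sqrtA lam
  have hAlt : A < 2 + uf lam := sqrtA_lt h
  have h1 : (2 * S) ^ 2 < (A - uf lam) ^ 2 := by nlinarith
  have h2 : 0 ≤ A - uf lam := by linarith
  exact lt_of_pow_lt_pow_left₀ 2 h2 h1


lemma exp_neg_le {a c : ℝ} (ha : 0 ≤ a) (hc : 0 < c)
    (h : 1 ≤ c * ∑ i ∈ Finset.range 12, (a / 2.7182818286) ^ i / (Nat.factorial i : ℝ)) :
    Real.exp (-(a / Real.exp 1)) ≤ c := by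
  have hE : Real.exp 1 ≤ 2.7182818286 := le_of_lt Real.exp_one_lt_d9
  have he := Real.exp_pos 1
  have h1 : a / 2.7182818286 ≤ a / Real.exp 1 := div_le_div_of_nonneg_left ha he hE
  have h0 : 0 ≤ a / 2.7182818286 := by positivity
  have h2 : (∑ i ∈ Finset.range 12, (a / 2.7182818286) ^ i / (Nat.factorial i : ℝ))
      ≤ Real.exp (a / 2.7182818286) := Real.sum_le_exp_of_nonneg h0 12
  have h3 : Real.exp (a / 2.7182818286) ≤ Real.exp (a / Real.exp 1) := Real.exp_le_exp.2 h1
  have h4 : 1 ≤ c * Real.exp (a / Real.exp 1) :=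
    h.trans (by nlinarith [Real.exp_pos (a / 2.7182818286)])
  rw [Real.exp_neg, inv_eq_one_div, div_le_iff₀ (Real.exp_pos _)]
  linarith

lemma step {a b ub s r : ℝ} (ha : 0 < a)
    (hub0 : 0 < ub)
    (hub : Real.exp (-(a / Real.exp 1)) ≤ ub)
    (hs : 4 + ub ^ 2 ≤ s ^ 2) (hs0 : 0 ≤ s)
    (hr0 : 0 < r) (hr : r ^ 2 ≤ 1 - ub)
    (hmain : b * (ub * (s - ub)) ≤ 2 * r)
    {lam : ℝ} (h1 : a ≤ lam) (h2 : lam ≤ b) :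
    lam * uf lam * (Real.sqrt (4 + uf lam ^ 2) - uf lam) ≤ 2 * Real.sqrt (1 - uf lam) := by
  have hu0 := uf_pos lam
  have hub' : uf lam ≤ ub := (uf_anti h1).trans hub
  have m1 : uf lam * (Real.sqrt (4 + uf lam ^ 2) - uf lam) ≤ ub * (Real.sqrt (4 + ub ^ 2) - ub) :=
    mono_uA hu0.le hub'
  have hsub : Real.sqrt (4 + ub ^ 2) ≤ s := by
    calc Real.sqrt (4 + ub ^ 2) ≤ Real.sqrt (s ^ 2) := Real.sqrt_le_sqrt hs
      _ = s := Real.sqrt_sq hs0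
  have m2 : ub * (Real.sqrt (4 + ub ^ 2) - ub) ≤ ub * (s - ub) := by nlinarith
  have hfac0 : 0 ≤ uf lam * (Real.sqrt (4 + uf lam ^ 2) - uf lam) :=
    mul_nonneg hu0.le (by linarith [uf_le_sqrt lam])
  have hlam0 : 0 < lam := lt_of_lt_of_le ha h1
  calc lam * uf lam * (Real.sqrt (4 + uf lam ^ 2) - uf lam)
      = lam * (uf lam * (Real.sqrt (4 + uf lam ^ 2) - uf lam)) := by ring
    _ ≤ b * (ub * (s - ub)) := mul_le_mul h2 (m1.trans m2) hfac0 (by linarith)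
    _ ≤ 2 * r := hmain
    _ ≤ 2 * Real.sqrt (1 - uf lam) := by
        have : r ≤ Real.sqrt (1 - uf lam) := Real.le_sqrt_of_sq_le (by linarith)
        linarith

lemma step0 {lam : ℝ} (h0 : 0 < lam) (h2 : lam ≤ 1/2) :
    lam * uf lam * (Real.sqrt (4 + uf lam ^ 2) - uf lam) ≤ 2 * Real.sqrt (1 - uf lam) := by
  have hu0 := uf_pos lam
  have hu1 := uf_lt_one h0
  have he9 : (2.7182818283 : ℝ) < Real.exp 1 := Real.exp_one_gt_d9
  have heE : Real.exp 1 < 2.7182818286 := Real.exp_one_lt_d9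
  have he := Real.exp_pos 1
  -- u ≥ 1 - lam/e ≥ 0.8159
  have hxle : lam / Real.exp 1 ≤ 0.184 := by
    rw [div_le_iff₀ he]; nlinarith
  have hu_lb : (0.815 : ℝ) ≤ uf lam := by
    have := Real.add_one_le_exp (-(lam / Real.exp 1))
    have : 1 - lam / Real.exp 1 ≤ uf lam := by unfold uf; linarith
    linarith
  -- 1 - u ≥ lam * u / e ≥ 0.29 * lam
  have hexp1 : lam / Real.exp 1 + 1 ≤ Real.exp (lam / Real.exp 1) := Real.add_one_le_exp _
  have humul : uf lam * Real.exp (lam / Real.exp 1) = 1 := by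
    unfold uf; rw [← Real.exp_add]; simp
  have h1u : lam * uf lam / Real.exp 1 ≤ 1 - uf lam := by
    have h5 : uf lam * (lam / Real.exp 1 + 1) ≤ 1 := by
      calc uf lam * (lam / Real.exp 1 + 1) ≤ uf lam * Real.exp (lam / Real.exp 1) := by
            apply mul_le_mul_of_nonneg_left hexp1 hu0.le
        _ = 1 := humul
    have : uf lam * (lam / Real.exp 1) + uf lam ≤ 1 := by nlinarith
    calc lam * uf lam / Real.exp 1 = uf lam * (lam / Real.exp 1) := by ring
      _ ≤ 1 - uf lam := by linarith
  have h1u' : (0.29 : ℝ) * lam ≤ 1 - uf lam := by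
    calc (0.29 : ℝ) * lam ≤ lam * uf lam / Real.exp 1 := by
          rw [← sub_nonneg]
          have : lam * uf lam / Real.exp 1 - 0.29 * lam = lam * (uf lam - 0.29 * Real.exp 1) / Real.exp 1 := by
            field_simp
          rw [this]
          apply div_nonneg _ he.le
          apply mul_nonneg h0.le
          nlinarith
      _ ≤ 1 - uf lam := h1u
  -- u (A - u) ≤ √5 - 1 ≤ 1.2361
  have hmono := mono_uA hu0.le hu1.le
  have hs5 : Real.sqrt (4 + 1 ^ 2) ≤ 2.2361 := by
    rw [show (4 + 1 ^ 2 : ℝ) = 5 by norm_num]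
    calc Real.sqrt 5 ≤ Real.sqrt (2.2361 ^ 2) := Real.sqrt_le_sqrt (by norm_num)
      _ = 2.2361 := Real.sqrt_sq (by norm_num)
  have hfac : uf lam * (Real.sqrt (4 + uf lam ^ 2) - uf lam) ≤ 1.2361 := by
    calc uf lam * (Real.sqrt (4 + uf lam ^ 2) - uf lam) ≤ 1 * (Real.sqrt (4 + 1 ^ 2) - 1) := hmono
      _ ≤ 1.2361 := by linarith
  -- conclude
  have hrhs : 2 * Real.sqrt (0.29 * lam) ≤ 2 * Real.sqrt (1 - uf lam) := by
    have := Real.sqrt_le_sqrt h1u'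
    linarith
  have hlhs : lam * uf lam * (Real.sqrt (4 + uf lam ^ 2) - uf lam) ≤ lam * 1.2361 := by
    calc lam * uf lam * (Real.sqrt (4 + uf lam ^ 2) - uf lam)
        = lam * (uf lam * (Real.sqrt (4 + uf lam ^ 2) - uf lam)) := by ring
      _ ≤ lam * 1.2361 := by nlinarith
  have hmid : lam * 1.2361 ≤ 2 * Real.sqrt (0.29 * lam) := by
    have h6 : lam * 1.2361 / 2 ≤ Real.sqrt (0.29 * lam) := by
      apply Real.le_sqrt_of_sq_le
      nlinarith
    linarith
  linarith

lemma phi_bound {lam : ℝ} (h0 : 0 < lam) (h32 : lam ≤ 3/2) :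
    lam * uf lam * (Real.sqrt (4 + uf lam ^ 2) - uf lam) ≤ 2 * Real.sqrt (1 - uf lam) := by
  rcases le_or_gt lam (1/2) with h | h
  · exact step0 h0 h
  rcases le_or_gt lam (369/500 : ℝ) with h' | h
  · exact step (a := (1/2 : ℝ)) (b := (369/500 : ℝ)) (ub := (415992977/500000000 : ℝ)) (s := (2166148803/1000000000 : ℝ)) (r := (204947581/500000000 : ℝ))
      (by norm_num) (by norm_num)
      (exp_neg_le (by norm_num) (by norm_num) (by
        simp only [Finset.sum_range_succ, Finset.sum_range_zero, Nat.factorial]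
        norm_num))
      (by norm_num) (by norm_num) (by norm_num) (by norm_num) (by norm_num) h.le h'
  rcases le_or_gt lam (116/125 : ℝ) with h' | h
  · exact step (a := (369/500 : ℝ)) (b := (116/125 : ℝ)) (ub := (381119537/500000000 : ℝ)) (s := (535082261/250000000 : ℝ)) (r := (243803673/500000000 : ℝ))
      (by norm_num) (by norm_num)
      (exp_neg_le (by norm_num) (by norm_num) (by
        simp only [Finset.sum_range_succ, Finset.sum_range_zero, Nat.factorial]
        norm_num))
      (by norm_num) (by norm_num) (by norm_num) (by norm_num) (by norm_num) h.le h'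
  rcases le_or_gt lam (1071/1000 : ℝ) with h' | h
  · exact step (a := (116/125 : ℝ)) (b := (1071/1000 : ℝ)) (ub := (355390071/500000000 : ℝ)) (s := (16980381/8000000 : ℝ)) (r := (537791647/1000000000 : ℝ))
      (by norm_num) (by norm_num)
      (exp_neg_le (by norm_num) (by norm_num) (by
        simp only [Finset.sum_range_succ, Finset.sum_range_zero, Nat.factorial]
        norm_num))
      (by norm_num) (by norm_num) (by norm_num) (by norm_num) (by norm_num) h.le h'
  rcases le_or_gt lam (589/500 : ℝ) with h' | h
  · exact step (a := (1071/1000 : ℝ)) (b := (589/500 : ℝ)) (ub := (674354811/1000000000 : ℝ)) (s := (527657229/250000000 : ℝ)) (r := (285326649/500000000 : ℝ))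
      (by norm_num) (by norm_num)
      (exp_neg_le (by norm_num) (by norm_num) (by
        simp only [Finset.sum_range_succ, Finset.sum_range_zero, Nat.factorial]
        norm_num))
      (by norm_num) (by norm_num) (by norm_num) (by norm_num) (by norm_num) h.le h'
  rcases le_or_gt lam (629/500 : ℝ) with h' | h
  · exact step (a := (589/500 : ℝ)) (b := (629/500 : ℝ)) (ub := (81040721/125000000 : ℝ)) (s := (262807151/125000000 : ℝ)) (r := (74127659/125000000 : ℝ))
      (by norm_num) (by norm_num)
      (exp_neg_le (by norm_num) (by norm_num) (by
        simp only [Finset.sum_range_succ, Finset.sum_range_zero, Nat.factorial]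
        norm_num))
      (by norm_num) (by norm_num) (by norm_num) (by norm_num) (by norm_num) h.le h'
  rcases le_or_gt lam (1317/1000 : ℝ) with h' | h
  · exact step (a := (629/500 : ℝ)) (b := (1317/1000 : ℝ)) (ub := (157380837/250000000 : ℝ)) (s := (524183869/250000000 : ℝ)) (r := (60866793/100000000 : ℝ))
      (by norm_num) (by norm_num)
      (exp_neg_le (by norm_num) (by norm_num) (by
        simp only [Finset.sum_range_succ, Finset.sum_range_zero, Nat.factorial]
        norm_num))
      (by norm_num) (by norm_num) (by norm_num) (by norm_num) (by norm_num) h.le h'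
  rcases le_or_gt lam (681/500 : ℝ) with h' | h
  · exact step (a := (1317/1000 : ℝ)) (b := (681/500 : ℝ)) (ub := (616006833/1000000000 : ℝ)) (s := (2092716997/1000000000 : ℝ)) (r := (30983591/50000000 : ℝ))
      (by norm_num) (by norm_num)
      (exp_neg_le (by norm_num) (by norm_num) (by
        simp only [Finset.sum_range_succ, Finset.sum_range_zero, Nat.factorial]
        norm_num))
      (by norm_num) (by norm_num) (by norm_num) (by norm_num) (by norm_num) h.le h'
  rcases le_or_gt lam (349/250 : ℝ) with h' | h
  · exact step (a := (681/500 : ℝ)) (b := (349/250 : ℝ)) (ub := (605893047/1000000000 : ℝ)) (s := (1044881141/500000000 : ℝ)) (r := (31388969/50000000 : ℝ))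
      (by norm_num) (by norm_num)
      (exp_neg_le (by norm_num) (by norm_num) (by
        simp only [Finset.sum_range_succ, Finset.sum_range_zero, Nat.factorial]
        norm_num))
      (by norm_num) (by norm_num) (by norm_num) (by norm_num) (by norm_num) h.le h'
  rcases le_or_gt lam (711/500 : ℝ) with h' | h
  · exact step (a := (349/250 : ℝ)) (b := (711/500 : ℝ)) (ub := (119672359/200000000 : ℝ)) (s := (2087591159/1000000000 : ℝ)) (r := (633749321/1000000000 : ℝ))
      (by norm_num) (by norm_num)
      (exp_neg_le (by norm_num) (by norm_num) (by
        simp only [Finset.sum_range_succ, Finset.sum_range_zero, Nat.factorial]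
        norm_num))
      (by norm_num) (by norm_num) (by norm_num) (by norm_num) (by norm_num) h.le h'
  rcases le_or_gt lam (721/500 : ℝ) with h' | h
  · exact step (a := (711/500 : ℝ)) (b := (721/500 : ℝ)) (ub := (592665829/1000000000 : ℝ)) (s := (83438627/40000000 : ℝ)) (r := (159556841/250000000 : ℝ))
      (by norm_num) (by norm_num)
      (exp_neg_le (by norm_num) (by norm_num) (by
        simp only [Finset.sum_range_succ, Finset.sum_range_zero, Nat.factorial]
        norm_num))
      (by norm_num) (by norm_num) (by norm_num) (by norm_num) (by norm_num) h.le h'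
  rcases le_or_gt lam (1457/1000 : ℝ) with h' | h
  · exact step (a := (721/500 : ℝ)) (b := (1457/1000 : ℝ)) (ub := (14708031/25000000 : ℝ)) (s := (2084735449/1000000000 : ℝ)) (r := (641621973/1000000000 : ℝ))
      (by norm_num) (by norm_num)
      (exp_neg_le (by norm_num) (by norm_num) (by
        simp only [Finset.sum_range_succ, Finset.sum_range_zero, Nat.factorial]
        norm_num))
      (by norm_num) (by norm_num) (by norm_num) (by norm_num) (by norm_num) h.le h'
  rcases le_or_gt lam (1469/1000 : ℝ) with h' | h
  · exact step (a := (1457/1000 : ℝ)) (b := (1469/1000 : ℝ)) (ub := (9141933/15625000 : ℝ)) (s := (2083824119/1000000000 : ℝ)) (r := (644139957/1000000000 : ℝ))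
      (by norm_num) (by norm_num)
      (exp_neg_le (by norm_num) (by norm_num) (by
        simp only [Finset.sum_range_succ, Finset.sum_range_zero, Nat.factorial]
        norm_num))
      (by norm_num) (by norm_num) (by norm_num) (by norm_num) (by norm_num) h.le h'
  rcases le_or_gt lam (739/500 : ℝ) with h' | h
  · exact step (a := (1469/1000 : ℝ)) (b := (739/500 : ℝ)) (ub := (582506521/1000000000 : ℝ)) (s := (104155099/50000000 : ℝ)) (r := (646137351/1000000000 : ℝ))
      (by norm_num) (by norm_num)
      (exp_neg_le (by norm_num) (by norm_num) (by
        simp only [Finset.sum_range_succ, Finset.sum_range_zero, Nat.factorial]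
        norm_num))
      (by norm_num) (by norm_num) (by norm_num) (by norm_num) (by norm_num) h.le h'
  rcases le_or_gt lam (297/200 : ℝ) with h' | h
  · exact step (a := (739/500 : ℝ)) (b := (297/200 : ℝ)) (ub := (580581081/1000000000 : ℝ)) (s := (2082564381/1000000000 : ℝ)) (r := (323812799/500000000 : ℝ))
      (by norm_num) (by norm_num)
      (exp_neg_le (by norm_num) (by norm_num) (by
        simp only [Finset.sum_range_succ, Finset.sum_range_zero, Nat.factorial]
        norm_num))
      (by norm_num) (by norm_num) (by norm_num) (by norm_num) (by norm_num) h.le h'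
  rcases le_or_gt lam (149/100 : ℝ) with h' | h
  · exact step (a := (297/200 : ℝ)) (b := (149/100 : ℝ)) (ub := (579087917/1000000000 : ℝ)) (s := (8133393/3906250 : ℝ)) (r := (648777373/1000000000 : ℝ))
      (by norm_num) (by norm_num)
      (exp_neg_le (by norm_num) (by norm_num) (by
        simp only [Finset.sum_range_succ, Finset.sum_range_zero, Nat.factorial]
        norm_num))
      (by norm_num) (by norm_num) (by norm_num) (by norm_num) (by norm_num) h.le h'
  rcases le_or_gt lam (747/500 : ℝ) with h' | h
  · exact step (a := (149/100 : ℝ)) (b := (747/500 : ℝ)) (ub := (144505931/250000000 : ℝ)) (s := (416370577/200000000 : ℝ)) (r := (40599813/62500000 : ℝ))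
      (by norm_num) (by norm_num)
      (exp_neg_le (by norm_num) (by norm_num) (by
        simp only [Finset.sum_range_succ, Finset.sum_range_zero, Nat.factorial]
        norm_num))
      (by norm_num) (by norm_num) (by norm_num) (by norm_num) (by norm_num) h.le h'
  rcases le_or_gt lam (1497/1000 : ℝ) with h' | h
  · exact step (a := (747/500 : ℝ)) (b := (1497/1000 : ℝ)) (ub := (577173777/1000000000 : ℝ)) (s := (2081617059/1000000000 : ℝ)) (r := (65025089/100000000 : ℝ))
      (by norm_num) (by norm_num)
      (exp_neg_le (by norm_num) (by norm_num) (by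
        simp only [Finset.sum_range_succ, Finset.sum_range_zero, Nat.factorial]
        norm_num))
      (by norm_num) (by norm_num) (by norm_num) (by norm_num) (by norm_num) h.le h'
  exact step (a := (1497/1000 : ℝ)) (b := (3/2 : ℝ)) (ub := (576537137/1000000000 : ℝ)) (s := (1040720313/500000000 : ℝ)) (r := (8134253/12500000 : ℝ))
    (by norm_num) (by norm_num)
    (exp_neg_le (by norm_num) (by norm_num) (by
      simp only [Finset.sum_range_succ, Finset.sum_range_zero, Nat.factorial]
      norm_num))
    (by norm_num) (by norm_num) (by norm_num) (by norm_num) (by norm_num) h.le h32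


/-- the "base" function B. -/
noncomputable def bf (lam : ℝ) : ℝ :=
  (Real.sqrt (4 + uf lam ^ 2) - uf lam) / (2 * Real.sqrt (1 - uf lam))

lemma bf_gt_one {lam : ℝ} (h : 0 < lam) : 1 < bf lam := by
  have hd : 0 < 2 * Real.sqrt (1 - uf lam) := by
    have := uf_lt_one h
    have : 0 < Real.sqrt (1 - uf lam) := Real.sqrt_pos.2 (by linarith)
    linarith
  rw [bf, lt_div_iff₀ hd]
  simpa using N_gt h

lemma hFun_eq {q lam : ℝ} (hq : 0 < q) (hl : 0 < lam) :
    hFun q lam = lam * uf lam * (bf lam) ^ (1/q) := by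
  have hu0 := uf_pos lam
  have hu1 := uf_lt_one hl
  have hD : (0:ℝ) < 1 - uf lam := by linarith
  have hS : 0 < Real.sqrt (1 - uf lam) := Real.sqrt_pos.2 hD
  have hN : 0 ≤ Real.sqrt (4 + uf lam ^ 2) - uf lam := by
    have := two_le_sqrtA lam; have := uf_lt_one hl; linarith
  have h2 : Real.exp (-(2 * lam / Real.exp 1)) = uf lam ^ 2 := by
    rw [uf, sq, ← Real.exp_add]; ring_nf
  have e3 : (1 - uf lam) ^ (1/(2*q) : ℝ) = Real.sqrt (1 - uf lam) ^ (1/q : ℝ) := by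
    rw [Real.sqrt_eq_rpow, ← Real.rpow_mul hD.le, show (1:ℝ)/2 * (1/q) = 1/(2*q) by ring]
  rw [hFun, bf, show Real.exp (-(lam / Real.exp 1)) = uf lam from rfl, h2, e3]
  rw [Real.div_rpow hN (by positivity : (0:ℝ) ≤ 2 * Real.sqrt (1 - uf lam))]
  rw [Real.mul_rpow (by norm_num) (Real.sqrt_nonneg _)]

lemma key1 {q lam : ℝ} (hq : 1 < q) (h0 : 0 < lam) (h32 : lam ≤ 3/2) : hFun q lam < 1 := by
  have hq0 : (0:ℝ) < q := by linarith
  have hB := bf_gt_one h0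
  have hu0 := uf_pos lam
  have hu1 := uf_lt_one h0
  have hD : (0:ℝ) < 1 - uf lam := by linarith
  have hS : 0 < Real.sqrt (1 - uf lam) := Real.sqrt_pos.2 hD
  rw [hFun_eq hq0 h0]
  have h1q : 1/q < 1 := by rw [div_lt_one hq0]; exact hq
  have hlt : bf lam ^ (1/q : ℝ) < bf lam := by
    nth_rewrite 2 [← Real.rpow_one (bf lam)]
    exact Real.rpow_lt_rpow_of_exponent_lt hB h1q
  have hphi : lam * uf lam * bf lam ≤ 1 := by
    rw [bf, mul_div_assoc']
    rw [div_le_one (by linarith)]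
    exact phi_bound h0 h32
  calc lam * uf lam * bf lam ^ (1/q : ℝ) < lam * uf lam * bf lam := by
        apply mul_lt_mul_of_pos_left hlt (by positivity)
    _ ≤ 1 := hphi

lemma one_lt_hFun_e {q : ℝ} (hq : 1 < q) : 1 < hFun q (Real.exp 1) := by
  have he : (0:ℝ) < Real.exp 1 := Real.exp_pos 1
  have hq0 : (0:ℝ) < q := by linarith
  rw [hFun_eq hq0 he]
  have h1 : Real.exp 1 * uf (Real.exp 1) = 1 := by
    rw [uf, div_self he.ne', Real.exp_neg, mul_inv_cancel₀ (Real.exp_ne_zero 1)]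
  rw [h1, one_mul]
  rw [Real.one_lt_rpow_iff_of_pos (by linarith [bf_gt_one he])]
  exact Or.inl ⟨bf_gt_one he, by positivity⟩

lemma hFun_contOn {q : ℝ} (hq : 1 < q) : ContinuousOn (hFun q) (Ioi (0:ℝ)) := by
  have hq0 : (0:ℝ) < q := by linarith
  have hcongr : ∀ lam ∈ Ioi (0:ℝ), lam * uf lam * (bf lam) ^ (1/q : ℝ) = hFun q lam :=
    fun lam hl => (hFun_eq hq0 hl).symm
  apply ContinuousOn.congr _ fun lam hl => (hFun_eq hq0 hl)
  intro x hx
  have hx0 : (0:ℝ) < x := hx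
  apply ContinuousAt.continuousWithinAt
  have hu : Continuous uf := by
    unfold uf; exact Real.continuous_exp.comp (by continuity)
  have hA : Continuous (fun lam => Real.sqrt (4 + uf lam ^ 2)) :=
    Real.continuous_sqrt.comp (by continuity)
  have hnum : Continuous (fun lam => Real.sqrt (4 + uf lam ^ 2) - uf lam) := hA.sub hu
  have hden : Continuous (fun lam => 2 * Real.sqrt (1 - uf lam)) := by
    apply Continuous.mul continuous_const
    exact Real.continuous_sqrt.comp (continuous_const.sub hu)
  have hden0 : 2 * Real.sqrt (1 - uf x) ≠ 0 := by
    have := uf_lt_one hx0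
    have : 0 < Real.sqrt (1 - uf x) := Real.sqrt_pos.2 (by linarith)
    positivity
  have hbfc : ContinuousAt bf x := by
    apply ContinuousAt.div (hnum.continuousAt) (hden.continuousAt) hden0
  have hbf0 : bf x ≠ 0 := by linarith [bf_gt_one hx0]
  exact (continuousAt_id.mul hu.continuousAt).mul (hbfc.rpow_const (Or.inl hbf0))

/-- strict monotonicity of `x ↦ x e^{-x/e}` on `[0, e]`. -/
lemma gmono : StrictMonoOn (fun x : ℝ => x * Real.exp (-(x / Real.exp 1))) (Icc 0 (Real.exp 1)) := by
  have he := Real.exp_pos 1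
  apply strictMonoOn_of_deriv_pos (convex_Icc _ _)
  · apply Continuous.continuousOn
    exact continuous_id.mul (Real.continuous_exp.comp (by continuity))
  · intro x hx
    rw [interior_Icc] at hx
    have hder : HasDerivAt (fun x : ℝ => x * Real.exp (-(x / Real.exp 1)))
        (1 * Real.exp (-(x / Real.exp 1)) + x * (Real.exp (-(x / Real.exp 1)) * (-(1 / Real.exp 1)))) x := by
      have h1 : HasDerivAt (fun x : ℝ => -(x / Real.exp 1)) (-(1 / Real.exp 1)) x := by
        exact ((hasDerivAt_id x).div_const (Real.exp 1)).neg
      exact (hasDerivAt_id x).mul h1.exp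
    rw [hder.deriv]
    have hexp := Real.exp_pos (-(x / Real.exp 1))
    have h2 : x / Real.exp 1 < 1 := (div_lt_one he).2 hx.2
    have h3 : 1 - x / Real.exp 1 > 0 := by linarith
    calc (0:ℝ) < Real.exp (-(x / Real.exp 1)) * (1 - x / Real.exp 1) := by positivity
      _ = 1 * Real.exp (-(x / Real.exp 1)) + x * (Real.exp (-(x / Real.exp 1)) * (-(1 / Real.exp 1))) := by
          field_simp; ring


lemma e_gt_32 : (3/2 : ℝ) < Real.exp 1 := by
  have := Real.exp_one_gt_d9; linarith

lemma exists_root {q b : ℝ} (hq : 1 < q) (hb : 3/2 < b) (hfb : 1 < hFun q b) :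
    ∃ x ∈ Ioo (3/2 : ℝ) b, hFun q x = 1 := by
  have hcont : ContinuousOn (hFun q) (Icc (3/2 : ℝ) b) :=
    (hFun_contOn hq).mono (fun x hx => lt_of_lt_of_le (by norm_num) hx.1)
  have h32 : hFun q (3/2 : ℝ) < 1 := key1 hq (by norm_num) le_rfl
  obtain ⟨x, hx, hx1⟩ := intermediate_value_Ioo hb.le hcont (⟨h32, hfb⟩ : (1:ℝ) ∈ Ioo _ _)
  exact ⟨x, hx, hx1⟩

lemma S_sub {q : ℝ} (hq : 1 < q) :
    {lam : ℝ | 0 < lam ∧ hFun q lam = 1} ⊆ Ici (3/2 : ℝ) := by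
  intro y hy
  rcases le_or_gt (3/2) y with h | h
  · exact h
  · exact absurd hy.2 (ne_of_lt (key1 hq hy.1 h.le))

lemma S_least {q : ℝ} (hq : 1 < q) :
    ∃ lam0, IsLeast {lam : ℝ | 0 < lam ∧ hFun q lam = 1} lam0 := by
  set S := {lam : ℝ | 0 < lam ∧ hFun q lam = 1} with hS
  obtain ⟨x, hx, hx1⟩ := exists_root hq e_gt_32 (one_lt_hFun_e hq)
  have hxS : x ∈ S := ⟨by linarith [hx.1], hx1⟩
  have hEq : S = Ici (3/2 : ℝ) ∩ hFun q ⁻¹' {1} := by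
    ext y
    constructor
    · intro hy; exact ⟨S_sub hq hy, hy.2⟩
    · rintro ⟨hy1, hy2⟩
      exact ⟨by simp only [mem_Ici] at hy1; linarith, hy2⟩
  have hclosed : IsClosed S := by
    rw [hEq]
    apply ContinuousOn.preimage_isClosed_of_isClosed _ isClosed_Ici isClosed_singleton
    exact (hFun_contOn hq).mono (fun x hx => lt_of_lt_of_le (by norm_num) (mem_Ici.1 hx))
  have hbdd : BddBelow S := ⟨3/2, S_sub hq⟩
  refine ⟨sInf S, hclosed.csInf_mem ⟨x, hxS⟩ hbdd, fun y hy => csInf_le hbdd hy⟩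

lemma least_bounds {q m : ℝ} (hq : 1 < q)
    (hm : IsLeast {lam : ℝ | 0 < lam ∧ hFun q lam = 1} m) :
    3 / 2 < m ∧ m < Real.exp 1 := by
  obtain ⟨⟨hm0, hm1⟩, hmlb⟩ := hm
  constructor
  · rcases lt_or_eq_of_le (mem_Ici.1 (S_sub hq ⟨hm0, hm1⟩)) with h | h
    · exact h
    · exact absurd hm1 (ne_of_lt (key1 hq hm0 h.symm.le))
  · obtain ⟨x, hx, hx1⟩ := exists_root hq e_gt_32 (one_lt_hFun_e hq)
    have : m ≤ x := hmlb ⟨by linarith [hx.1], hx1⟩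
    linarith [hx.2]

lemma least_lt {q q' m m' : ℝ} (hq : 1 < q) (hqq' : q < q')
    (hm : IsLeast {lam : ℝ | 0 < lam ∧ hFun q lam = 1} m)
    (hm' : IsLeast {lam : ℝ | 0 < lam ∧ hFun q' lam = 1} m') : m < m' := by
  have hq' : 1 < q' := hq.trans hqq'
  have hw0 : 0 < m' := hm'.1.1
  have hw1 : hFun q' m' = 1 := hm'.1.2
  have h32 : 3/2 < m' := (least_bounds hq' hm').1
  have hbig : 1 < hFun q m' := by
    have hB := bf_gt_one hw0
    have hlt : bf m' ^ (1/q' : ℝ) < bf m' ^ (1/q : ℝ) := by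
      apply Real.rpow_lt_rpow_of_exponent_lt hB
      rw [div_lt_div_iff₀ (by linarith) (by linarith)]
      linarith
    have hpos : 0 < m' * uf m' := mul_pos hw0 (uf_pos m')
    have := mul_lt_mul_of_pos_left hlt hpos
    rw [← hFun_eq (by linarith : (0:ℝ) < q) hw0] at this
    rw [← hFun_eq (by linarith : (0:ℝ) < q') hw0] at this
    rw [hw1] at this
    exact this
  obtain ⟨x, hx, hx1⟩ := exists_root hq h32 hbig
  have : m ≤ x := hm.2 ⟨by linarith [hx.1], hx1⟩
  linarith [hx.2]

lemma eventually_big {c : ℝ} (h32 : 3/2 < c) (hce : c < Real.exp 1) :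
    ∀ᶠ q in atTop, ∀ lam ∈ Icc (3/2 : ℝ) c, hFun q lam < 1 := by
  have he := Real.exp_pos 1
  set K := c * Real.exp (-(c / Real.exp 1)) with hKdef
  set Cst := Real.sqrt 5 / (2 * Real.sqrt (1 - uf (3/2))) with hCdef
  have hu32 : uf (3/2 : ℝ) < 1 := uf_lt_one (by norm_num)
  have hden32 : 0 < 2 * Real.sqrt (1 - uf (3/2 : ℝ)) := by
    have : 0 < Real.sqrt (1 - uf (3/2 : ℝ)) := Real.sqrt_pos.2 (by linarith)
    linarith
  have hC0 : 0 < Cst := by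
    apply div_pos (Real.sqrt_pos.2 (by norm_num)) hden32
  have hK1 : K < 1 := by
    have h1 : (fun x : ℝ => x * Real.exp (-(x / Real.exp 1))) c
        < (fun x : ℝ => x * Real.exp (-(x / Real.exp 1))) (Real.exp 1) := by
      apply gmono ⟨by linarith, hce.le⟩ ⟨he.le, le_rfl⟩ hce
    have h2 : Real.exp 1 * Real.exp (-(Real.exp 1 / Real.exp 1)) = 1 := by
      rw [div_self he.ne', Real.exp_neg, mul_inv_cancel₀ (Real.exp_ne_zero 1)]
    simp only at h1
    rw [h2] at h1
    exact h1
  have hK0 : 0 ≤ K := by positivity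
  have hbound : ∀ q : ℝ, 0 < q → ∀ lam ∈ Icc (3/2 : ℝ) c, hFun q lam ≤ K * Cst ^ (1/q : ℝ) := by
    intro q hq lam hlam
    obtain ⟨hl1, hl2⟩ := hlam
    have hl0 : (0:ℝ) < lam := by linarith
    have hB1 := bf_gt_one hl0
    rw [hFun_eq hq hl0]
    have hg : lam * uf lam ≤ K := by
      rcases eq_or_lt_of_le hl2 with h | h
      · subst h; exact le_of_eq rfl
      · exact le_of_lt (gmono ⟨by linarith, by linarith⟩ ⟨by linarith, hce.le⟩ h)
    have hBC : bf lam ≤ Cst := by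
      rw [bf, hCdef]
      apply div_le_div₀ (Real.sqrt_nonneg 5) _ hden32 _
      · have h5 : Real.sqrt (4 + uf lam ^ 2) ≤ Real.sqrt 5 := by
          apply Real.sqrt_le_sqrt
          have := uf_le_one hl0.le
          nlinarith [uf_pos lam]
        linarith [(uf_pos lam).le]
      · have : uf lam ≤ uf (3/2 : ℝ) := uf_anti hl1
        have := Real.sqrt_le_sqrt (by linarith : 1 - uf (3/2:ℝ) ≤ 1 - uf lam)
        linarith
    have hrp : bf lam ^ (1/q : ℝ) ≤ Cst ^ (1/q : ℝ) :=
      Real.rpow_le_rpow (by linarith) hBC (by positivity)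
    exact mul_le_mul hg hrp (Real.rpow_nonneg (by linarith) _) hK0
  have htend : Tendsto (fun q : ℝ => K * Cst ^ (1/q : ℝ)) atTop (𝓝 K) := by
    have h1 : Tendsto (fun q : ℝ => 1/q) atTop (𝓝 0) := by
      simpa only [one_div] using tendsto_inv_atTop_zero
    have h2 : Tendsto (fun q : ℝ => Cst ^ (1/q : ℝ)) atTop (𝓝 1) := by
      have h3 : Tendsto (fun q : ℝ => Real.log Cst * (1/q)) atTop (𝓝 0) := by
        simpa using h1.const_mul (Real.log Cst)
      have h4 := (Real.continuous_exp.tendsto 0).comp h3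
      simp only [Real.exp_zero] at h4
      convert h4 using 2 with q
      rw [Real.rpow_def_of_pos hC0]
      rfl
    simpa using tendsto_const_nhds.mul h2
  have hev : ∀ᶠ q in atTop, K * Cst ^ (1/q : ℝ) < 1 := htend.eventually_lt_const hK1
  filter_upwards [hev, eventually_gt_atTop (0:ℝ)] with q hq1 hq0 lam hlam
  exact lt_of_le_of_lt (hbound q hq0 lam hlam) hq1


end Stmt13

/-- For every `q > 1` the set `{λ > 0 : h_q(λ) = 1}` has a least element
`λ₀(q)`, which satisfies `3/2 < λ₀(q) < e`; moreover `q ↦ λ₀(q)` is increasing on `(1,∞)`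
and tends to `e` as `q → ∞`. -/
theorem stmt_13 :
    (∀ q : ℝ, 1 < q → ∃ lam0 : ℝ, IsLeast {lam : ℝ | 0 < lam ∧ hFun q lam = 1} lam0) ∧
    ∀ L : ℝ → ℝ, (∀ q : ℝ, 1 < q → IsLeast {lam : ℝ | 0 < lam ∧ hFun q lam = 1} (L q)) →
      (∀ q : ℝ, 1 < q → 3 / 2 < L q ∧ L q < Real.exp 1) ∧
      StrictMonoOn L (Set.Ioi 1) ∧
      Filter.Tendsto L Filter.atTop (nhds (Real.exp 1)) := by
  constructor
  · intro q hq
    exact Stmt13.S_least hq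
  · intro L hL
    refine ⟨fun q hq => Stmt13.least_bounds hq (hL q hq), ?_, ?_⟩
    · intro q hq q' hq' hlt
      exact Stmt13.least_lt (Set.mem_Ioi.1 hq) hlt (hL q (Set.mem_Ioi.1 hq))
        (hL q' (Set.mem_Ioi.1 hq'))
    · rw [tendsto_order]
      constructor
      · intro c hc
        rcases le_or_gt c (3/2) with h | h
        · filter_upwards [Filter.eventually_gt_atTop (1:ℝ)] with q hq
          have := (Stmt13.least_bounds hq (hL q hq)).1
          linarith
        · filter_upwards [Stmt13.eventually_big h hc, Filter.eventually_gt_atTop (1:ℝ)]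
            with q hbig hq
          by_contra hle
          push_neg at hle
          have h1 := (Stmt13.least_bounds hq (hL q hq)).1
          have h2 := (hL q hq).1.2
          have h3 := hbig (L q) ⟨by linarith, hle⟩
          rw [h2] at h3
          exact lt_irrefl 1 h3
      · intro c hc
        filter_upwards [Filter.eventually_gt_atTop (1:ℝ)] with q hq
        have := (Stmt13.least_bounds hq (hL q hq)).2
        linarith
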